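/- Let μ be a directed distance on a nonempty finite set S. Then each of T_μ, Q_μ, Q_μ^+, and every balanced section R ⊆ Q_μ is geodesic: for every pair of points p, q in the set there exists a continuous map ρ : [0,1] → ℝ^{S^{cr}} (with respect to the Euclidean topology) whose image lies in the set, with ρ(0) = p, ρ(1) = q, and whose directed length from p to q, namely sup{ Σ_{i=0}^{n−1} D_∞(ρ(t_i), ρ(t_{i+1})) : n ≥ 1, 0 = t_0 ≤ t_1 ≤ ⋯ ≤ t_n = 1 }, equals D_∞(p,q). -/

import Mathlib

open scoped BigOperators

/-- Points of `ℝ^{S^{cr}}`: pairs `p = (p^c, p^r)` of functions `S → ℝ`,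
with the componentwise partial order (the product/pi order). -/
abbrev Pt (S : Type*) := (S → ℝ) × (S → ℝ)

/-- `μ` is a directed distance: nonnegative with zero diagonal. -/
def DirDist {S : Type*} (μ : S → S → ℝ) : Prop :=
  (∀ s t, 0 ≤ μ s t) ∧ (∀ s, μ s s = 0)

/-- `d` is a directed metric: a directed distance satisfying the triangle inequality. -/
def DirMetric {V : Type*} (d : V → V → ℝ) : Prop :=
  DirDist d ∧ ∀ x y z, d x z ≤ d x y + d y z

/-- The polyhedron `Π_μ`. -/
def PiP {S : Type*} (μ : S → S → ℝ) : Set (Pt S) :=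
  {p | ∀ s t, μ s t ≤ p.1 s + p.2 t}

/-- The polyhedron `P_μ = Π_μ ∩ ℝ_+^{S^{cr}}`. -/
def PP {S : Type*} (μ : S → S → ℝ) : Set (Pt S) :=
  {p ∈ PiP μ | 0 ≤ p}

/-- The directed tight span `T_μ`: minimal elements of `P_μ`. -/
def TT {S : Type*} (μ : S → S → ℝ) : Set (Pt S) :=
  {p ∈ PP μ | ∀ q ∈ PP μ, q ≤ p → q = p}

/-- `Q_μ`: minimal elements of `Π_μ`. -/
def QQ {S : Type*} (μ : S → S → ℝ) : Set (Pt S) :=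
  {p ∈ PiP μ | ∀ q ∈ PiP μ, q ≤ p → q = p}

/-- `Q_μ^+ = Q_μ ∩ ℝ_+^{S^{cr}}`. -/
def QP {S : Type*} (μ : S → S → ℝ) : Set (Pt S) :=
  QQ μ ∩ {p | 0 ≤ p}

/-- `D_∞^+(f,g) = max_x (g(x) - f(x))_+`. -/
noncomputable def Dplus {X : Type*} [Fintype X] (f g : X → ℝ) : ℝ :=
  ⨆ x, max (g x - f x) 0

/-- `D_∞(p,q) = max ( D_∞^+(p^c,q^c), D_∞^+(q^r,p^r) )`. -/
noncomputable def Dinf {S : Type*} [Fintype S] (p q : Pt S) : ℝ :=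
  max (Dplus p.1 q.1) (Dplus q.2 p.2)

/-- A subset `R` is balanced if no pair `p, q ∈ R` satisfies `p^c < q^c`,
and no pair satisfies `p^r < q^r`. -/
def BalancedSet {S : Type*} (R : Set (Pt S)) : Prop :=
  (¬ ∃ p ∈ R, ∃ q ∈ R, ∀ s, p.1 s < q.1 s) ∧
  (¬ ∃ p ∈ R, ∃ q ∈ R, ∀ s, p.2 s < q.2 s)

/-- The vector `e = (1, -1)` spanning the linearity space of `Π_μ`. -/
def eVec (S : Type*) : Pt S := (fun _ => 1, fun _ => -1)

/-- `R ⊆ Q_μ` is a section: every point of `Q_μ` differs from exactly one point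
of `R` by a multiple of `e`. -/
def IsSection {S : Type*} (μ : S → S → ℝ) (R : Set (Pt S)) : Prop :=
  R ⊆ QQ μ ∧ ∀ q ∈ QQ μ, ∃! p, p ∈ R ∧ ∃ α : ℝ, q - p = α • eVec S

/-- The length of the cycle `(x 0, x 1, …, x m)` with respect to `d`. -/
def cycLen {V : Type*} (d : V → V → ℝ) (m : ℕ) (x : Fin (m + 1) → V) : ℝ :=
  ∑ i, d (x i) (x (i + 1))


/-- The directed length of a path `ρ` from `ρ 0` to `ρ 1`:
the supremum over partitions `0 = t_0 ≤ t_1 ≤ ⋯ ≤ t_n = 1` of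
`Σ_i D_∞(ρ(t_i), ρ(t_{i+1}))`. -/
noncomputable def pathLen {S : Type*} [Fintype S] (ρ : ℝ → Pt S) : ℝ :=
  sSup {L : ℝ | ∃ (n : ℕ) (t : Fin (n + 2) → ℝ), Monotone t ∧
    t 0 = 0 ∧ t (Fin.last (n + 1)) = 1 ∧
    L = ∑ i : Fin (n + 1), Dinf (ρ (t i.castSucc)) (ρ (t i.succ))}

/-- A subset `U` of `ℝ^{S^{cr}}` is geodesic: any `p, q ∈ U` are joined by a
continuous path inside `U` of directed length `D_∞(p,q)` from `p` to `q`. -/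
def IsGeodesicSet {S : Type*} [Fintype S] (U : Set (Pt S)) : Prop :=
  ∀ p ∈ U, ∀ q ∈ U, ∃ ρ : ℝ → Pt S, ContinuousOn ρ (Set.Icc 0 1) ∧
    ρ '' Set.Icc 0 1 ⊆ U ∧ ρ 0 = p ∧ ρ 1 = q ∧ pathLen ρ = Dinf p q

section Aux

open Finset in
private theorem fin_tele {n : ℕ} (F : Fin (n + 2) → ℝ) :
    ∑ i : Fin (n + 1), (F i.succ - F i.castSucc) = F (Fin.last (n + 1)) - F 0 := by
  induction n with
  | zero => simp [Fin.sum_univ_one]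
  | succ n ih =>
      rw [Fin.sum_univ_castSucc]
      have h := ih (fun j => F j.castSucc)
      simp only [Fin.succ_castSucc] at h ⊢
      rw [h, Fin.succ_last]
      have h0 : (0 : Fin (n+2)).castSucc = 0 := rfl
      rw [h0]
      ring

variable {S : Type*} [Fintype S] [Nonempty S]

private noncomputable def fsup (f : S → ℝ) : ℝ := Finset.univ.sup' Finset.univ_nonempty f
private noncomputable def finf (f : S → ℝ) : ℝ := Finset.univ.inf' Finset.univ_nonempty f

private theorem le_fsup (f : S → ℝ) (s : S) : f s ≤ fsup f :=
  Finset.le_sup' f (Finset.mem_univ s)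

private theorem fsup_le {f : S → ℝ} {x : ℝ} (h : ∀ s, f s ≤ x) : fsup f ≤ x :=
  Finset.sup'_le _ _ fun s _ => h s

private theorem exists_fsup (f : S → ℝ) : ∃ s, fsup f = f s := by
  obtain ⟨s, -, h⟩ := Finset.exists_mem_eq_sup' (Finset.univ_nonempty (α := S)) f
  exact ⟨s, h⟩

private theorem finf_le (f : S → ℝ) (s : S) : finf f ≤ f s :=
  Finset.inf'_le f (Finset.mem_univ s)

private theorem le_finf {f : S → ℝ} {x : ℝ} (h : ∀ s, x ≤ f s) : x ≤ finf f :=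
  Finset.le_inf' _ _ fun s _ => h s

private theorem exists_finf (f : S → ℝ) : ∃ s, finf f = f s := by
  obtain ⟨s, -, h⟩ := Finset.exists_mem_eq_inf' (Finset.univ_nonempty (α := S)) f
  exact ⟨s, h⟩

private theorem Dplus_eq_fsup (f g : S → ℝ) :
    Dplus f g = fsup (fun x => max (g x - f x) 0) := by
  unfold Dplus
  apply le_antisymm
  · exact ciSup_le fun x => le_fsup (fun x => max (g x - f x) 0) x
  · exact fsup_le fun s => le_ciSup (f := fun x => max (g x - f x) 0)
      (Set.Finite.bddAbove (Set.finite_range _)) s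

private theorem Dplus_nonneg (f g : S → ℝ) : 0 ≤ Dplus f g := by
  rw [Dplus_eq_fsup]
  obtain s := Classical.arbitrary S
  exact le_trans (le_max_right _ 0) (le_fsup (fun x => max (g x - f x) 0) s)

private theorem sub_le_Dplus (f g : S → ℝ) (s : S) : g s - f s ≤ Dplus f g := by
  rw [Dplus_eq_fsup]
  exact le_trans (le_max_left _ 0) (le_fsup (fun x => max (g x - f x) 0) s)

private theorem Dplus_le {f g : S → ℝ} {C : ℝ} (hC : 0 ≤ C) (h : ∀ s, g s - f s ≤ C) :
    Dplus f g ≤ C := by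
  rw [Dplus_eq_fsup]
  exact fsup_le fun s => max_le (h s) hC

private theorem Dinf_nonneg (p q : Pt S) : 0 ≤ Dinf p q :=
  le_trans (Dplus_nonneg p.1 q.1) (le_max_left _ _)

private theorem cdiff_le_Dinf (p q : Pt S) (s : S) : q.1 s - p.1 s ≤ Dinf p q :=
  le_trans (sub_le_Dplus p.1 q.1 s) (le_max_left _ _)

private theorem rdiff_le_Dinf (p q : Pt S) (u : S) : p.2 u - q.2 u ≤ Dinf p q :=
  le_trans (sub_le_Dplus q.2 p.2 u) (le_max_right _ _)

private theorem Dinf_le {p q : Pt S} {C : ℝ} (hC : 0 ≤ C)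
    (hc : ∀ s, q.1 s - p.1 s ≤ C) (hr : ∀ u, p.2 u - q.2 u ≤ C) : Dinf p q ≤ C :=
  max_le (Dplus_le hC hc) (Dplus_le hC hr)

/-- Main computation of `pathLen` from a per-pair estimate with a telescoping
correction term `g`. -/
private theorem pathLen_eq {ρ : ℝ → Pt S} {D : ℝ} (g : ℝ → ℝ)
    (hg0 : g 0 = 0) (hg1 : g 1 = 0)
    (hpair : ∀ t t' : ℝ, 0 ≤ t → t ≤ t' → t' ≤ 1 →
      Dinf (ρ t) (ρ t') ≤ D * (t' - t) + (g t' - g t))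
    (hends : Dinf (ρ 0) (ρ 1) = D) : pathLen ρ = D := by
  have hub : ∀ L ∈ {L : ℝ | ∃ (n : ℕ) (t : Fin (n + 2) → ℝ), Monotone t ∧
      t 0 = 0 ∧ t (Fin.last (n + 1)) = 1 ∧
      L = ∑ i : Fin (n + 1), Dinf (ρ (t i.castSucc)) (ρ (t i.succ))}, L ≤ D := by
    rintro L ⟨n, t, hmono, h0, h1, rfl⟩
    have key : ∀ i : Fin (n + 1), Dinf (ρ (t i.castSucc)) (ρ (t i.succ)) ≤
        (D * t i.succ + g (t i.succ)) - (D * t i.castSucc + g (t i.castSucc)) := by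
      intro i
      have h0i : (0 : ℝ) ≤ t i.castSucc := by
        rw [← h0]; exact hmono (Fin.zero_le _)
      have hii : t i.castSucc ≤ t i.succ := hmono (Fin.castSucc_le_succ i)
      have hi1 : t i.succ ≤ 1 := by
        rw [← h1]; exact hmono (Fin.le_last _)
      have := hpair _ _ h0i hii hi1
      calc Dinf (ρ (t i.castSucc)) (ρ (t i.succ)) ≤
          D * (t i.succ - t i.castSucc) + (g (t i.succ) - g (t i.castSucc)) := this
        _ = (D * t i.succ + g (t i.succ)) - (D * t i.castSucc + g (t i.castSucc)) := by ring
    calc ∑ i : Fin (n + 1), Dinf (ρ (t i.castSucc)) (ρ (t i.succ))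
        ≤ ∑ i : Fin (n + 1), ((D * t i.succ + g (t i.succ)) -
            (D * t i.castSucc + g (t i.castSucc))) := Finset.sum_le_sum fun i _ => key i
      _ = (D * t (Fin.last (n+1)) + g (t (Fin.last (n+1)))) - (D * t 0 + g (t 0)) :=
          fin_tele (fun j => D * t j + g (t j))
      _ = D := by rw [h0, h1, hg0, hg1]; ring
  have hmem : D ∈ {L : ℝ | ∃ (n : ℕ) (t : Fin (n + 2) → ℝ), Monotone t ∧
      t 0 = 0 ∧ t (Fin.last (n + 1)) = 1 ∧
      L = ∑ i : Fin (n + 1), Dinf (ρ (t i.castSucc)) (ρ (t i.succ))} := by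
    refine ⟨0, fun i => (i : ℕ), ?_, ?_, ?_, ?_⟩
    · intro i j hij
      exact_mod_cast Nat.cast_le.2 (Fin.le_iff_val_le_val.1 hij)
    · norm_num
    · norm_num [Fin.last]
    · rw [Fin.sum_univ_one,
        show ((0 : Fin 1).castSucc : Fin 2) = 0 from rfl,
        show ((0 : Fin 1).succ : Fin 2) = 1 from rfl]
      norm_num [hends]
  exact IsGreatest.csSup_eq ⟨hmem, hub⟩

end Aux
section Aux2
set_option linter.unusedSectionVars false

variable {S : Type*} [Fintype S] [Nonempty S] {μ : S → S → ℝ}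

private noncomputable def psi (μ : S → S → ℝ) [Fintype S] [Nonempty S] (c : S → ℝ) : S → ℝ :=
  fun u => fsup (fun s => μ s u - c s)

private theorem le_psi (c : S → ℝ) (s u : S) : μ s u - c s ≤ psi μ c u :=
  le_fsup (fun s => μ s u - c s) s

private theorem psi_le {c : S → ℝ} {u : S} {x : ℝ} (h : ∀ s, μ s u - c s ≤ x) :
    psi μ c u ≤ x := fsup_le h

private theorem exists_psi (c : S → ℝ) (u : S) : ∃ s, psi μ c u = μ s u - c s :=
  exists_fsup _

private theorem psi_shift {c c' : S → ℝ} {C : ℝ} (h : ∀ s, c' s ≤ c s + C) (u : S) :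
    psi μ c u ≤ psi μ c' u + C :=
  psi_le fun s => by have h1 := le_psi (μ := μ) c' s u; have h2 := h s; linarith

/-- Membership in `Q_μ` from feasibility and tightness of all coordinates. -/
private theorem mem_QQ_of {z : Pt S} (hfeas : ∀ s u, μ s u ≤ z.1 s + z.2 u)
    (hc : ∀ s, ∃ u, z.1 s + z.2 u = μ s u)
    (hr : ∀ u, ∃ s, z.1 s + z.2 u = μ s u) : z ∈ QQ μ := by
  refine ⟨hfeas, fun y hy hle => ?_⟩
  have hy' : ∀ s u, μ s u ≤ y.1 s + y.2 u := hy
  have h1 : y.1 = z.1 := by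
    funext s
    obtain ⟨u, hu⟩ := hc s
    have := hy' s u
    have h2 := hle.2 u
    have h3 := hle.1 s
    linarith
  have h2 : y.2 = z.2 := by
    funext u
    obtain ⟨s, hs⟩ := hr u
    have := hy' s u
    have h2 := hle.2 u
    have h3 := hle.1 s
    linarith
  exact Prod.ext h1 h2

private theorem QQ_feas {z : Pt S} (hz : z ∈ QQ μ) : ∀ s u, μ s u ≤ z.1 s + z.2 u := hz.1

private theorem QQ_ctight {z : Pt S} (hz : z ∈ QQ μ) (s₀ : S) :
    ∃ u, z.1 s₀ + z.2 u = μ s₀ u := by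
  classical
  by_contra h
  push_neg at h
  have hslack : ∀ u, 0 < z.1 s₀ + z.2 u - μ s₀ u := fun u =>
    lt_of_le_of_ne (by linarith [hz.1 s₀ u]) (by intro he; exact h u (by linarith))
  set ε := finf (fun u => z.1 s₀ + z.2 u - μ s₀ u) with hε
  have hεpos : 0 < ε := by
    obtain ⟨u, hu⟩ := exists_finf (fun u => z.1 s₀ + z.2 u - μ s₀ u)
    rw [hε, hu]; exact hslack u
  set y : Pt S := (fun s => if s = s₀ then z.1 s - ε else z.1 s, z.2) with hy
  have hyP : y ∈ PiP μ := by
    intro s u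
    by_cases hs : s = s₀
    · subst hs
      have := finf_le (fun u => z.1 s + z.2 u - μ s u) u
      simp [hy]
      linarith
    · simpa [hy, hs] using hz.1 s u
  have hle : y ≤ z := by
    refine ⟨fun s => ?_, fun u => le_rfl⟩
    by_cases hs : s = s₀ <;> simp [hy, hs] <;> linarith
  have heq := hz.2 y hyP hle
  have := congrFun (congrArg Prod.fst heq) s₀
  simp [hy] at this
  linarith

private theorem QQ_rtight {z : Pt S} (hz : z ∈ QQ μ) (u₀ : S) :
    ∃ s, z.1 s + z.2 u₀ = μ s u₀ := by
  classical
  by_contra h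
  push_neg at h
  have hslack : ∀ s, 0 < z.1 s + z.2 u₀ - μ s u₀ := fun s =>
    lt_of_le_of_ne (by linarith [hz.1 s u₀]) (by intro he; exact h s (by linarith))
  set ε := finf (fun s => z.1 s + z.2 u₀ - μ s u₀) with hε
  have hεpos : 0 < ε := by
    obtain ⟨s, hs⟩ := exists_finf (fun s => z.1 s + z.2 u₀ - μ s u₀)
    rw [hε, hs]; exact hslack s
  set y : Pt S := (z.1, fun u => if u = u₀ then z.2 u - ε else z.2 u) with hy
  have hyP : y ∈ PiP μ := by
    intro s u
    by_cases hu : u = u₀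
    · subst hu
      have := finf_le (fun s => z.1 s + z.2 u - μ s u) s
      simp [hy]
      linarith
    · simpa [hy, hu] using hz.1 s u
  have hle : y ≤ z := by
    refine ⟨fun s => le_rfl, fun u => ?_⟩
    by_cases hu : u = u₀ <;> simp [hy, hu] <;> linarith
  have heq := hz.2 y hyP hle
  have := congrFun (congrArg Prod.snd heq) u₀
  simp [hy] at this
  linarith

private theorem QQ_psi {z : Pt S} (hz : z ∈ QQ μ) (u : S) : psi μ z.1 u = z.2 u := by
  refine le_antisymm (psi_le fun s => by linarith [hz.1 s u]) ?_
  obtain ⟨s, hs⟩ := QQ_rtight hz u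
  calc z.2 u = μ s u - z.1 s := by linarith
    _ ≤ psi μ z.1 u := le_psi _ s u

/-- Membership in `T_μ`. -/
private theorem mem_TT_of {z : Pt S} (hfeas : ∀ s u, μ s u ≤ z.1 s + z.2 u)
    (hc0 : ∀ s, 0 ≤ z.1 s) (hr0 : ∀ u, 0 ≤ z.2 u)
    (hc : ∀ s, z.1 s = 0 ∨ ∃ u, z.1 s + z.2 u = μ s u)
    (hr : ∀ u, z.2 u = 0 ∨ ∃ s, z.1 s + z.2 u = μ s u) : z ∈ TT μ := by
  refine ⟨⟨hfeas, ⟨fun s => hc0 s, fun u => hr0 u⟩⟩, fun y hy hle => ?_⟩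
  have hy' : ∀ s u, μ s u ≤ y.1 s + y.2 u := hy.1
  have hy1 : ∀ s, 0 ≤ y.1 s := fun s => hy.2.1 s
  have hy2 : ∀ u, 0 ≤ y.2 u := fun u => hy.2.2 u
  have h1 : y.1 = z.1 := by
    funext s
    rcases hc s with h0 | ⟨u, hu⟩
    · have := hy1 s; have := hle.1 s; rw [h0] at *; linarith
    · have := hy' s u
      have h2 := hle.2 u
      have h3 := hle.1 s
      linarith
  have h2 : y.2 = z.2 := by
    funext u
    rcases hr u with h0 | ⟨s, hs⟩
    · have := hy2 u; have := hle.2 u; rw [h0] at *; linarith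
    · have := hy' s u
      have h2 := hle.2 u
      have h3 := hle.1 s
      linarith
  exact Prod.ext h1 h2

private theorem TT_feas {z : Pt S} (hz : z ∈ TT μ) : ∀ s u, μ s u ≤ z.1 s + z.2 u := hz.1.1

private theorem TT_cnonneg {z : Pt S} (hz : z ∈ TT μ) (s : S) : 0 ≤ z.1 s := hz.1.2.1 s
private theorem TT_rnonneg {z : Pt S} (hz : z ∈ TT μ) (u : S) : 0 ≤ z.2 u := hz.1.2.2 u

private theorem TT_ctight {z : Pt S} (hz : z ∈ TT μ) (s₀ : S) :
    z.1 s₀ = 0 ∨ ∃ u, z.1 s₀ + z.2 u = μ s₀ u := by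
  classical
  by_contra h
  push_neg at h
  obtain ⟨h0, h⟩ := h
  have hpos : 0 < z.1 s₀ := lt_of_le_of_ne (TT_cnonneg hz s₀) (Ne.symm h0)
  have hslack : ∀ u, 0 < z.1 s₀ + z.2 u - μ s₀ u := fun u =>
    lt_of_le_of_ne (by linarith [TT_feas hz s₀ u]) (by intro he; exact h u (by linarith))
  set ε := min (finf (fun u => z.1 s₀ + z.2 u - μ s₀ u)) (z.1 s₀) with hε
  have hεpos : 0 < ε := by
    obtain ⟨u, hu⟩ := exists_finf (fun u => z.1 s₀ + z.2 u - μ s₀ u)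
    rw [hε]
    exact lt_min (hu ▸ hslack u) hpos
  set y : Pt S := (fun s => if s = s₀ then z.1 s - ε else z.1 s, z.2) with hy
  have hyP : y ∈ PP μ := by
    refine ⟨fun s u => ?_, ⟨fun s => ?_, fun u => TT_rnonneg hz u⟩⟩
    · by_cases hs : s = s₀
      · subst hs
        have h1 := finf_le (fun u => z.1 s + z.2 u - μ s u) u
        have h2 : ε ≤ finf (fun u => z.1 s + z.2 u - μ s u) := min_le_left _ _
        simp [hy]
        linarith
      · simpa [hy, hs] using TT_feas hz s u
    · by_cases hs : s = s₀
      · subst hs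
        have h2 : ε ≤ z.1 s := min_le_right _ _
        simp [hy]
        linarith
      · simpa [hy, hs] using TT_cnonneg hz s
  have hle : y ≤ z := by
    refine ⟨fun s => ?_, fun u => le_rfl⟩
    by_cases hs : s = s₀ <;> simp [hy, hs] <;> linarith
  have heq := hz.2 y hyP hle
  have := congrFun (congrArg Prod.fst heq) s₀
  simp [hy] at this
  linarith

private theorem TT_rtight {z : Pt S} (hz : z ∈ TT μ) (u₀ : S) :
    z.2 u₀ = 0 ∨ ∃ s, z.1 s + z.2 u₀ = μ s u₀ := by
  classical
  by_contra h
  push_neg at h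
  obtain ⟨h0, h⟩ := h
  have hpos : 0 < z.2 u₀ := lt_of_le_of_ne (TT_rnonneg hz u₀) (Ne.symm h0)
  have hslack : ∀ s, 0 < z.1 s + z.2 u₀ - μ s u₀ := fun s =>
    lt_of_le_of_ne (by linarith [TT_feas hz s u₀]) (by intro he; exact h s (by linarith))
  set ε := min (finf (fun s => z.1 s + z.2 u₀ - μ s u₀)) (z.2 u₀) with hε
  have hεpos : 0 < ε := by
    obtain ⟨s, hs⟩ := exists_finf (fun s => z.1 s + z.2 u₀ - μ s u₀)
    rw [hε]
    exact lt_min (hs ▸ hslack s) hpos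
  set y : Pt S := (z.1, fun u => if u = u₀ then z.2 u - ε else z.2 u) with hy
  have hyP : y ∈ PP μ := by
    refine ⟨fun s u => ?_, ⟨fun s => TT_cnonneg hz s, fun u => ?_⟩⟩
    · by_cases hu : u = u₀
      · subst hu
        have h1 := finf_le (fun s => z.1 s + z.2 u - μ s u) s
        have h2 : ε ≤ finf (fun s => z.1 s + z.2 u - μ s u) := min_le_left _ _
        simp [hy]
        linarith
      · simpa [hy, hu] using TT_feas hz s u
    · by_cases hu : u = u₀
      · subst hu
        have h2 : ε ≤ z.2 u := min_le_right _ _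
        simp [hy]
        linarith
      · simpa [hy, hu] using TT_rnonneg hz u
  have hle : y ≤ z := by
    refine ⟨fun s => le_rfl, fun u => ?_⟩
    by_cases hu : u = u₀ <;> simp [hy, hu] <;> linarith
  have heq := hz.2 y hyP hle
  have := congrFun (congrArg Prod.snd heq) u₀
  simp [hy] at this
  linarith

private theorem TT_psi {z : Pt S} (hz : z ∈ TT μ) (u : S) :
    max (psi μ z.1 u) 0 = z.2 u := by
  refine le_antisymm (max_le (psi_le fun s => by linarith [TT_feas hz s u])
    (TT_rnonneg hz u)) ?_
  rcases TT_rtight hz u with h0 | ⟨s, hs⟩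
  · rw [h0]; exact le_max_right _ _
  · calc z.2 u = μ s u - z.1 s := by linarith
      _ ≤ psi μ z.1 u := le_psi _ s u
      _ ≤ max (psi μ z.1 u) 0 := le_max_left _ _

end Aux2
section Aux3
set_option linter.unusedSectionVars false

variable {S : Type*} [Fintype S] [Nonempty S] {μ : S → S → ℝ}

/-- clamp to `[0,1]` -/
private noncomputable def clmp (t : ℝ) : ℝ := max 0 (min 1 t)

private theorem clmp_nonneg (t : ℝ) : 0 ≤ clmp t := le_max_left 0 _
private theorem clmp_le_one (t : ℝ) : clmp t ≤ 1 := max_le zero_le_one (min_le_left 1 t)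
private theorem clmp_eq {t : ℝ} (h0 : 0 ≤ t) (h1 : t ≤ 1) : clmp t = t := by
  unfold clmp; rw [min_eq_right h1, max_eq_right h0]
private theorem clmp_zero : clmp 0 = 0 := clmp_eq le_rfl zero_le_one
private theorem clmp_one : clmp 1 = 1 := clmp_eq zero_le_one le_rfl
private theorem clmp_cont : Continuous clmp :=
  continuous_const.max (continuous_const.min continuous_id)

/-- The tropical path in `c`-coordinates between `p` and `q`. -/
private noncomputable def cQ (p q : Pt S) : ℝ → S → ℝ :=
  fun t s => max (p.1 s - clmp t * Dinf q p) (q.1 s - (1 - clmp t) * Dinf p q)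

private theorem cQ_shift_up {p q : Pt S} {t t' : ℝ} (h0 : 0 ≤ t) (htt : t ≤ t')
    (h1 : t' ≤ 1) (s : S) : cQ p q t' s ≤ cQ p q t s + Dinf p q * (t' - t) := by
  have hD := Dinf_nonneg p q
  have hDΔ : 0 ≤ Dinf p q * (t' - t) := mul_nonneg hD (by linarith)
  have hD' : 0 ≤ Dinf q p := Dinf_nonneg q p
  have hΔ : (0:ℝ) ≤ t' - t := by linarith
  unfold cQ
  rw [clmp_eq h0 (le_trans htt h1), clmp_eq (le_trans h0 htt) h1]
  have h1' := le_max_left (p.1 s - t * Dinf q p) (q.1 s - (1 - t) * Dinf p q)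
  have h2' := le_max_right (p.1 s - t * Dinf q p) (q.1 s - (1 - t) * Dinf p q)
  apply max_le
  · nlinarith
  · nlinarith
  
private theorem cQ_shift_down {p q : Pt S} {t t' : ℝ} (h0 : 0 ≤ t) (htt : t ≤ t')
    (h1 : t' ≤ 1) (s : S) : cQ p q t s ≤ cQ p q t' s + Dinf q p * (t' - t) := by
  have hD := Dinf_nonneg q p
  have hDΔ : 0 ≤ Dinf q p * (t' - t) := mul_nonneg hD (by linarith)
  have hD'' : 0 ≤ Dinf p q := Dinf_nonneg p q
  have hΔ : (0:ℝ) ≤ t' - t := by linarith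
  unfold cQ
  rw [clmp_eq h0 (le_trans htt h1), clmp_eq (le_trans h0 htt) h1]
  have h1' := le_max_left (p.1 s - t' * Dinf q p) (q.1 s - (1 - t') * Dinf p q)
  have h2' := le_max_right (p.1 s - t' * Dinf q p) (q.1 s - (1 - t') * Dinf p q)
  apply max_le
  · nlinarith
  · nlinarith

private theorem cQ_zero {p q : Pt S} (s : S) : cQ p q 0 s = p.1 s := by
  have h := cdiff_le_Dinf p q s
  unfold cQ
  rw [clmp_zero]
  have e1 : p.1 s - 0 * Dinf q p = p.1 s := by ring
  have e2 : q.1 s - (1 - 0) * Dinf p q = q.1 s - Dinf p q := by ring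
  rw [e1, e2]
  exact max_eq_left (by linarith)

private theorem cQ_one {p q : Pt S} (s : S) : cQ p q 1 s = q.1 s := by
  have h := cdiff_le_Dinf q p s
  unfold cQ
  rw [clmp_one]
  have e1 : p.1 s - 1 * Dinf q p = p.1 s - Dinf q p := by ring
  have e2 : q.1 s - (1 - 1) * Dinf p q = q.1 s := by ring
  rw [e1, e2]
  exact max_eq_right (by linarith)

private theorem cQ_cont (p q : Pt S) (s : S) : Continuous (fun t => cQ p q t s) := by
  unfold cQ
  exact (continuous_const.sub (clmp_cont.mul continuous_const)).max
    (continuous_const.sub ((continuous_const.sub clmp_cont).mul continuous_const))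

private theorem psi_cQ_cont (p q : Pt S) (u : S) :
    Continuous (fun t => psi μ (cQ p q t) u) := by
  show Continuous fun t => Finset.univ.sup' Finset.univ_nonempty
    (fun s => μ s u - cQ p q t s)
  exact Continuous.finset_sup'_apply Finset.univ_nonempty
    (fun s _ => continuous_const.sub (cQ_cont p q s))

/-- The (shifted) tropical path. -/
private noncomputable def rhoQ (μ : S → S → ℝ) [Fintype S] [Nonempty S]
    (p q : Pt S) (α : ℝ → ℝ) : ℝ → Pt S :=
  fun t => (fun s => cQ p q t s + α t, fun u => psi μ (cQ p q t) u - α t)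

private theorem rhoQ_mem {p q : Pt S} (hp : p ∈ QQ μ) (hq : q ∈ QQ μ)
    (α : ℝ → ℝ) (t : ℝ) : rhoQ μ p q α t ∈ QQ μ := by
  have hb : 0 ≤ clmp t * Dinf q p := mul_nonneg (clmp_nonneg t) (Dinf_nonneg q p)
  have ha : 0 ≤ (1 - clmp t) * Dinf p q :=
    mul_nonneg (by linarith [clmp_le_one t]) (Dinf_nonneg p q)
  set b := clmp t * Dinf q p with hbdef
  set a := (1 - clmp t) * Dinf p q with hadef
  have hc : ∀ s, cQ p q t s = max (p.1 s - b) (q.1 s - a) := fun s => rfl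
  apply mem_QQ_of
  · intro s u
    have h := le_psi (μ := μ) (cQ p q t) s u
    show μ s u ≤ (cQ p q t s + α t) + (psi μ (cQ p q t) u - α t)
    linarith
  · intro s
    rcases le_total (q.1 s - a) (p.1 s - b) with hle | hle
    · obtain ⟨u, hu⟩ := QQ_ctight hp s
      have hpsi : psi μ (cQ p q t) u = p.2 u + b := by
        apply le_antisymm
        · apply psi_le
          intro s'
          have h1 : p.1 s' - b ≤ cQ p q t s' := by rw [hc s']; exact le_max_left _ _
          have h2 := le_psi (μ := μ) p.1 s' u
          have h3 := QQ_psi hp u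
          linarith
        · have h4 := le_psi (μ := μ) (cQ p q t) s u
          rw [hc s, max_eq_left hle] at h4
          linarith
      refine ⟨u, ?_⟩
      show (cQ p q t s + α t) + (psi μ (cQ p q t) u - α t) = μ s u
      rw [hpsi, hc s, max_eq_left hle]
      linarith
    · obtain ⟨u, hu⟩ := QQ_ctight hq s
      have hpsi : psi μ (cQ p q t) u = q.2 u + a := by
        apply le_antisymm
        · apply psi_le
          intro s'
          have h1 : q.1 s' - a ≤ cQ p q t s' := by rw [hc s']; exact le_max_right _ _
          have h2 := le_psi (μ := μ) q.1 s' u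
          have h3 := QQ_psi hq u
          linarith
        · have h4 := le_psi (μ := μ) (cQ p q t) s u
          rw [hc s, max_eq_right hle] at h4
          linarith
      refine ⟨u, ?_⟩
      show (cQ p q t s + α t) + (psi μ (cQ p q t) u - α t) = μ s u
      rw [hpsi, hc s, max_eq_right hle]
      linarith
  · intro u
    obtain ⟨s, hs⟩ := exists_psi (μ := μ) (cQ p q t) u
    refine ⟨s, ?_⟩
    show (cQ p q t s + α t) + (psi μ (cQ p q t) u - α t) = μ s u
    rw [hs]
    ring

private theorem rhoQ_zero {p q : Pt S} (hp : p ∈ QQ μ) {α : ℝ → ℝ} (hα0 : α 0 = 0) :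
    rhoQ μ p q α 0 = p := by
  have hc : cQ p q 0 = p.1 := funext fun s => cQ_zero s
  apply Prod.ext
  · funext s
    show cQ p q 0 s + α 0 = p.1 s
    rw [hc, hα0, add_zero]
  · funext u
    show psi μ (cQ p q 0) u - α 0 = p.2 u
    rw [hc, hα0, QQ_psi hp u, sub_zero]

private theorem rhoQ_one {p q : Pt S} (hq : q ∈ QQ μ) {α : ℝ → ℝ} (hα1 : α 1 = 0) :
    rhoQ μ p q α 1 = q := by
  have hc : cQ p q 1 = q.1 := funext fun s => cQ_one s
  apply Prod.ext
  · funext s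
    show cQ p q 1 s + α 1 = q.1 s
    rw [hc, hα1, add_zero]
  · funext u
    show psi μ (cQ p q 1) u - α 1 = q.2 u
    rw [hc, hα1, QQ_psi hq u, sub_zero]

private theorem rhoQ_cont (p q : Pt S) {α : ℝ → ℝ} (hα : Continuous α) :
    Continuous (rhoQ μ p q α) := by
  apply Continuous.prodMk
  · exact continuous_pi fun s => (cQ_cont p q s).add hα
  · exact continuous_pi fun u => (psi_cQ_cont p q u).sub hα

private theorem rhoQ_pair {p q : Pt S} {α : ℝ → ℝ} {t t' : ℝ}
    (h0 : 0 ≤ t) (htt : t ≤ t') (h1 : t' ≤ 1)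
    (hα : α t - Dinf p q * (t' - t) ≤ α t') :
    Dinf (rhoQ μ p q α t) (rhoQ μ p q α t') ≤
      Dinf p q * (t' - t) + (α t' - α t) := by
  apply Dinf_le (by linarith)
  · intro s
    have h := cQ_shift_up (p := p) (q := q) h0 htt h1 s
    show cQ p q t' s + α t' - (cQ p q t s + α t) ≤ _
    linarith
  · intro u
    have h := psi_shift (μ := μ)
      (fun s => cQ_shift_up (p := p) (q := q) h0 htt h1 s) u
    show (psi μ (cQ p q t) u - α t) - (psi μ (cQ p q t') u - α t') ≤ _
    linarith

/-- Geodesicity of `Q_μ`. -/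
private theorem QQ_geodesic : IsGeodesicSet (QQ μ) := by
  intro p hp q hq
  refine ⟨rhoQ μ p q (fun _ => 0), (rhoQ_cont p q continuous_const).continuousOn,
    ?_, rhoQ_zero hp rfl, rhoQ_one hq rfl, ?_⟩
  · rintro x ⟨t, -, rfl⟩
    exact rhoQ_mem hp hq _ t
  · refine pathLen_eq (fun _ => 0) rfl rfl ?_ ?_
    · intro t t' h0 htt h1
      have := rhoQ_pair (μ := μ) (α := fun _ => 0) h0 htt h1
        (by simpa using mul_nonneg (Dinf_nonneg p q) (by linarith : (0:ℝ) ≤ t' - t))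
      simpa using this
    · rw [rhoQ_zero hp rfl, rhoQ_one hq rfl]

end Aux3
section Aux4
set_option linter.unusedSectionVars false

variable {S : Type*} [Fintype S] [Nonempty S] {μ : S → S → ℝ}

/-- The shift needed to keep the tropical path nonnegative. -/
private noncomputable def alQ (μ : S → S → ℝ) [Fintype S] [Nonempty S]
    (p q : Pt S) : ℝ → ℝ :=
  fun t => max (-(finf (cQ p q t))) (min 0 (finf (fun u => psi μ (cQ p q t) u)))

private theorem alQ_cont (p q : Pt S) : Continuous (alQ μ p q) := by
  have h1 : Continuous (fun t => finf (cQ p q t)) := by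
    show Continuous fun t => Finset.univ.inf' Finset.univ_nonempty (fun s => cQ p q t s)
    exact Continuous.finset_inf'_apply Finset.univ_nonempty (fun s _ => cQ_cont p q s)
  have h2 : Continuous (fun t => finf (fun u => psi μ (cQ p q t) u)) := by
    show Continuous fun t => Finset.univ.inf' Finset.univ_nonempty
      (fun u => psi μ (cQ p q t) u)
    exact Continuous.finset_inf'_apply Finset.univ_nonempty (fun u _ => psi_cQ_cont p q u)
  exact Continuous.max h1.neg (continuous_const.min h2)

private theorem alQ_zero {p q : Pt S} (hp : p ∈ QQ μ) (hp0 : 0 ≤ p) : alQ μ p q 0 = 0 := by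
  have hc : cQ p q 0 = p.1 := funext fun s => cQ_zero s
  unfold alQ
  rw [hc]
  have h1 : 0 ≤ finf p.1 := le_finf fun s => hp0.1 s
  have h2 : 0 ≤ finf (fun u => psi μ p.1 u) := le_finf fun u => by
    rw [QQ_psi hp u]; exact hp0.2 u
  rw [min_eq_left h2, max_eq_right (by linarith)]

private theorem alQ_one {p q : Pt S} (hq : q ∈ QQ μ) (hq0 : 0 ≤ q) : alQ μ p q 1 = 0 := by
  have hc : cQ p q 1 = q.1 := funext fun s => cQ_one s
  unfold alQ
  rw [hc]
  have h1 : 0 ≤ finf q.1 := le_finf fun s => hq0.1 s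
  have h2 : 0 ≤ finf (fun u => psi μ q.1 u) := le_finf fun u => by
    rw [QQ_psi hq u]; exact hq0.2 u
  rw [min_eq_left h2, max_eq_right (by linarith)]

private theorem alQ_lb {p q : Pt S} {t t' : ℝ} (h0 : 0 ≤ t) (htt : t ≤ t') (h1 : t' ≤ 1) :
    alQ μ p q t - Dinf p q * (t' - t) ≤ alQ μ p q t' := by
  have hDΔ : 0 ≤ Dinf p q * (t' - t) := mul_nonneg (Dinf_nonneg p q) (by linarith)
  have hfc : finf (cQ p q t') ≤ finf (cQ p q t) + Dinf p q * (t' - t) := by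
    obtain ⟨s0, hs0⟩ := exists_finf (cQ p q t)
    calc finf (cQ p q t') ≤ cQ p q t' s0 := finf_le _ s0
      _ ≤ cQ p q t s0 + Dinf p q * (t' - t) := cQ_shift_up h0 htt h1 s0
      _ = finf (cQ p q t) + Dinf p q * (t' - t) := by rw [hs0]
  have hfr : finf (fun u => psi μ (cQ p q t) u) - Dinf p q * (t' - t) ≤
      finf (fun u => psi μ (cQ p q t') u) := by
    apply le_finf
    intro u
    have h2 := psi_shift (μ := μ) (fun s => cQ_shift_up (p := p) (q := q) h0 htt h1 s) u
    have h3 := finf_le (fun u => psi μ (cQ p q t) u) u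
    linarith
  apply sub_le_iff_le_add.2
  apply max_le
  · have : -(finf (cQ p q t)) ≤ -(finf (cQ p q t')) + Dinf p q * (t' - t) := by linarith
    calc -(finf (cQ p q t)) ≤ -(finf (cQ p q t')) + Dinf p q * (t' - t) := this
      _ ≤ alQ μ p q t' + Dinf p q * (t' - t) := by
          have := le_max_left (-(finf (cQ p q t')))
            (min 0 (finf (fun u => psi μ (cQ p q t') u)))
          unfold alQ; linarith
  · have h5 : min 0 (finf (fun u => psi μ (cQ p q t') u)) ≤ alQ μ p q t' :=
      le_max_right _ _
    rcases min_cases (0:ℝ) (finf (fun u => psi μ (cQ p q t') u)) with ⟨he, hle⟩ | ⟨he, hle⟩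
    · have h4 : min 0 (finf (fun u => psi μ (cQ p q t) u)) ≤ 0 := min_le_left _ _
      rw [he] at h5
      linarith
    · have h4 : min 0 (finf (fun u => psi μ (cQ p q t) u)) ≤
          finf (fun u => psi μ (cQ p q t) u) := min_le_right _ _
      rw [he] at h5
      linarith

private theorem rhoQP_nonneg (hμ : DirDist μ) {p q : Pt S} (t : ℝ) :
    0 ≤ rhoQ μ p q (alQ μ p q) t := by
  have hkey : ∀ u, -(finf (cQ p q t)) ≤ psi μ (cQ p q t) u := by
    intro u
    obtain ⟨s0, hs0⟩ := exists_finf (cQ p q t)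
    have h1 := le_psi (μ := μ) (cQ p q t) s0 u
    have h2 := hμ.1 s0 u
    rw [hs0]
    linarith
  constructor
  · intro s
    show (0 : S → ℝ) s ≤ cQ p q t s + alQ μ p q t
    have h1 : -(finf (cQ p q t)) ≤ alQ μ p q t := le_max_left _ _
    have h2 := finf_le (cQ p q t) s
    show (0:ℝ) ≤ cQ p q t s + alQ μ p q t
    linarith
  · intro u
    show (0 : S → ℝ) u ≤ psi μ (cQ p q t) u - alQ μ p q t
    have h1 : alQ μ p q t ≤ finf (fun u => psi μ (cQ p q t) u) := by
      apply max_le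
      · exact le_finf fun u => hkey u
      · exact min_le_right _ _
    have h2 := finf_le (fun u => psi μ (cQ p q t) u) u
    show (0:ℝ) ≤ psi μ (cQ p q t) u - alQ μ p q t
    linarith

/-- Geodesicity of `Q_μ^+`. -/
private theorem QP_geodesic (hμ : DirDist μ) : IsGeodesicSet (QP μ) := by
  intro p hp q hq
  obtain ⟨hpQ, hp0⟩ := hp
  obtain ⟨hqQ, hq0⟩ := hq
  have hα0 : alQ μ p q 0 = 0 := alQ_zero hpQ hp0
  have hα1 : alQ μ p q 1 = 0 := alQ_one hqQ hq0
  refine ⟨rhoQ μ p q (alQ μ p q), (rhoQ_cont p q (alQ_cont p q)).continuousOn,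
    ?_, rhoQ_zero hpQ hα0, rhoQ_one hqQ hα1, ?_⟩
  · rintro x ⟨t, -, rfl⟩
    exact ⟨rhoQ_mem hpQ hqQ _ t, rhoQP_nonneg hμ t⟩
  · refine pathLen_eq (alQ μ p q) hα0 hα1 ?_ ?_
    · intro t t' h0 htt h1
      exact rhoQ_pair h0 htt h1 (alQ_lb h0 htt h1)
    · rw [rhoQ_zero hpQ hα0, rhoQ_one hqQ hα1]

end Aux4
section Aux5
set_option linter.unusedSectionVars false

variable {S : Type*} [Fintype S] [Nonempty S] {μ : S → S → ℝ}

/-- Tropical path in `c`-coordinates for `T_μ` (clipped at `0`). -/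
private noncomputable def cT (p q : Pt S) : ℝ → S → ℝ :=
  fun t s => max (cQ p q t s) 0

private noncomputable def rhoT (μ : S → S → ℝ) [Fintype S] [Nonempty S]
    (p q : Pt S) : ℝ → Pt S :=
  fun t => (fun s => cT p q t s, fun u => max (psi μ (cT p q t) u) 0)

private theorem cT_shift_up {p q : Pt S} {t t' : ℝ} (h0 : 0 ≤ t) (htt : t ≤ t')
    (h1 : t' ≤ 1) (s : S) : cT p q t' s ≤ cT p q t s + Dinf p q * (t' - t) := by
  have hDΔ : 0 ≤ Dinf p q * (t' - t) := mul_nonneg (Dinf_nonneg p q) (by linarith)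
  have h := cQ_shift_up (p := p) (q := q) h0 htt h1 s
  unfold cT
  apply max_le
  · have := le_max_left (cQ p q t s) (0:ℝ)
    linarith
  · have := le_max_right (cQ p q t s) (0:ℝ)
    linarith

private theorem cT_zero {p q : Pt S} (hp0 : 0 ≤ p.1 s → True) : True := trivial

private theorem cT_cont (p q : Pt S) (s : S) : Continuous (fun t => cT p q t s) :=
  (cQ_cont p q s).max continuous_const

private theorem psi_cT_cont (p q : Pt S) (u : S) :
    Continuous (fun t => psi μ (cT p q t) u) := by
  show Continuous fun t => Finset.univ.sup' Finset.univ_nonempty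
    (fun s => μ s u - cT p q t s)
  exact Continuous.finset_sup'_apply Finset.univ_nonempty
    (fun s _ => continuous_const.sub (cT_cont p q s))

private theorem rhoT_cont (p q : Pt S) : Continuous (rhoT μ p q) := by
  apply Continuous.prodMk
  · exact continuous_pi fun s => cT_cont p q s
  · exact continuous_pi fun u => (psi_cT_cont p q u).max continuous_const

private theorem rhoT_zero {p q : Pt S} (hp : p ∈ TT μ) : rhoT μ p q 0 = p := by
  have hc : cT p q 0 = p.1 := funext fun s => by
    unfold cT
    rw [cQ_zero]
    exact max_eq_left (TT_cnonneg hp s)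
  apply Prod.ext
  · exact hc
  · funext u
    show max (psi μ (cT p q 0) u) 0 = p.2 u
    rw [hc]
    exact TT_psi hp u

private theorem rhoT_one {p q : Pt S} (hq : q ∈ TT μ) : rhoT μ p q 1 = q := by
  have hc : cT p q 1 = q.1 := funext fun s => by
    unfold cT
    rw [cQ_one]
    exact max_eq_left (TT_cnonneg hq s)
  apply Prod.ext
  · exact hc
  · funext u
    show max (psi μ (cT p q 1) u) 0 = q.2 u
    rw [hc]
    exact TT_psi hq u

private theorem rhoT_mem {p q : Pt S} (hp : p ∈ TT μ) (hq : q ∈ TT μ) (t : ℝ) :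
    rhoT μ p q t ∈ TT μ := by
  have hb : 0 ≤ clmp t * Dinf q p := mul_nonneg (clmp_nonneg t) (Dinf_nonneg q p)
  have ha : 0 ≤ (1 - clmp t) * Dinf p q :=
    mul_nonneg (by linarith [clmp_le_one t]) (Dinf_nonneg p q)
  set b := clmp t * Dinf q p with hbdef
  set a := (1 - clmp t) * Dinf p q with hadef
  have hc : ∀ s, cT p q t s = max (max (p.1 s - b) (q.1 s - a)) 0 := fun s => rfl
  apply mem_TT_of
  · intro s u
    have h := le_psi (μ := μ) (cT p q t) s u
    have h2 := le_max_left (psi μ (cT p q t) u) (0:ℝ)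
    show μ s u ≤ cT p q t s + max (psi μ (cT p q t) u) 0
    linarith
  · intro s
    exact le_max_right _ _
  · intro u
    exact le_max_right _ _
  · intro s
    by_cases h0 : cT p q t s = 0
    · exact Or.inl h0
    · right
      have hpos : 0 < cT p q t s :=
        lt_of_le_of_ne (le_max_right _ _) (Ne.symm h0)
      have hcmax : cT p q t s = max (p.1 s - b) (q.1 s - a) := by
        rcases max_cases (max (p.1 s - b) (q.1 s - a)) (0:ℝ) with ⟨he, -⟩ | ⟨he, hle⟩
        · exact he
        · rw [hc s] at hpos h0 ⊢; rw [he] at hpos; linarith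
      rcases le_total (q.1 s - a) (p.1 s - b) with hle | hle
      · have hcp : cT p q t s = p.1 s - b := by rw [hcmax]; exact max_eq_left hle
        have hppos : p.1 s ≠ 0 := by intro he; rw [he] at hcp; linarith
        rcases TT_ctight hp s with he | ⟨u, hu⟩
        · exact absurd he hppos
        · have hpsi : max (psi μ (cT p q t) u) 0 = p.2 u + b := by
            have hub : psi μ (cT p q t) u ≤ p.2 u + b := by
              apply psi_le
              intro s'
              have h1 : p.1 s' - b ≤ cT p q t s' := by
                rw [hc s']
                exact le_trans (le_max_left _ _) (le_max_left _ _)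
              have h2 := le_psi (μ := μ) p.1 s' u
              have h3 := TT_psi hp u
              have h4 := le_max_left (psi μ p.1 u) (0:ℝ)
              rw [h3] at h4
              linarith
            have hlb : p.2 u + b ≤ psi μ (cT p q t) u := by
              have h4 := le_psi (μ := μ) (cT p q t) s u
              rw [hcp] at h4
              linarith
            have hnn : 0 ≤ p.2 u + b := by
              have := TT_rnonneg hp u; linarith
            rw [max_eq_left (le_trans hnn hlb)]
            linarith
          refine ⟨u, ?_⟩
          show cT p q t s + max (psi μ (cT p q t) u) 0 = μ s u
          rw [hpsi, hcp]; linarith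
      · have hcp : cT p q t s = q.1 s - a := by rw [hcmax]; exact max_eq_right hle
        have hqpos : q.1 s ≠ 0 := by intro he; rw [he] at hcp; linarith
        rcases TT_ctight hq s with he | ⟨u, hu⟩
        · exact absurd he hqpos
        · have hpsi : max (psi μ (cT p q t) u) 0 = q.2 u + a := by
            have hub : psi μ (cT p q t) u ≤ q.2 u + a := by
              apply psi_le
              intro s'
              have h1 : q.1 s' - a ≤ cT p q t s' := by
                rw [hc s']
                exact le_trans (le_max_right _ _) (le_max_left _ _)
              have h2 := le_psi (μ := μ) q.1 s' u
              have h3 := TT_psi hq u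
              have h4 := le_max_left (psi μ q.1 u) (0:ℝ)
              rw [h3] at h4
              linarith
            have hlb : q.2 u + a ≤ psi μ (cT p q t) u := by
              have h4 := le_psi (μ := μ) (cT p q t) s u
              rw [hcp] at h4
              linarith
            have hnn : 0 ≤ q.2 u + a := by
              have := TT_rnonneg hq u; linarith
            rw [max_eq_left (le_trans hnn hlb)]
            linarith
          refine ⟨u, ?_⟩
          show cT p q t s + max (psi μ (cT p q t) u) 0 = μ s u
          rw [hpsi, hcp]; linarith
  · intro u
    by_cases h0 : max (psi μ (cT p q t) u) 0 = 0
    · exact Or.inl h0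
    · right
      have hpos : 0 < psi μ (cT p q t) u := by
        rcases max_cases (psi μ (cT p q t) u) (0:ℝ) with ⟨he, -⟩ | ⟨he, hle⟩
        · rw [he] at h0; exact lt_of_le_of_ne (by rw [← he]; exact le_max_right _ _)
            (Ne.symm h0)
        · exact absurd he h0
      obtain ⟨s, hs⟩ := exists_psi (μ := μ) (cT p q t) u
      refine ⟨s, ?_⟩
      show cT p q t s + max (psi μ (cT p q t) u) 0 = μ s u
      rw [max_eq_left (le_of_lt hpos), hs]
      ring

private theorem rhoT_pair {p q : Pt S} {t t' : ℝ}
    (h0 : 0 ≤ t) (htt : t ≤ t') (h1 : t' ≤ 1) :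
    Dinf (rhoT μ p q t) (rhoT μ p q t') ≤ Dinf p q * (t' - t) := by
  have hDΔ : 0 ≤ Dinf p q * (t' - t) := mul_nonneg (Dinf_nonneg p q) (by linarith)
  apply Dinf_le hDΔ
  · intro s
    have h := cT_shift_up (p := p) (q := q) h0 htt h1 s
    show cT p q t' s - cT p q t s ≤ _
    linarith
  · intro u
    have h := psi_shift (μ := μ)
      (fun s => cT_shift_up (p := p) (q := q) h0 htt h1 s) u
    show max (psi μ (cT p q t) u) 0 - max (psi μ (cT p q t') u) 0 ≤ _
    have h2 := le_max_left (psi μ (cT p q t') u) (0:ℝ)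
    have h3 := le_max_right (psi μ (cT p q t') u) (0:ℝ)
    apply sub_le_iff_le_add.2
    apply max_le <;> linarith

/-- Geodesicity of `T_μ`. -/
private theorem TT_geodesic : IsGeodesicSet (TT μ) := by
  intro p hp q hq
  refine ⟨rhoT μ p q, (rhoT_cont p q).continuousOn,
    ?_, rhoT_zero hp, rhoT_one hq, ?_⟩
  · rintro x ⟨t, -, rfl⟩
    exact rhoT_mem hp hq t
  · refine pathLen_eq (fun _ => 0) rfl rfl ?_ ?_
    · intro t t' h0 htt h1
      have := rhoT_pair (μ := μ) (p := p) (q := q) h0 htt h1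
      simpa using this
    · rw [rhoT_zero hp, rhoT_one hq]

end Aux5
section Aux6
set_option linter.unusedSectionVars false

variable {S : Type*} [Fintype S] [Nonempty S] {μ : S → S → ℝ}

private theorem section_geodesic {R : Set (Pt S)} (hsec : IsSection μ R)
    (hbal : BalancedSet R) : IsGeodesicSet R := by
  intro p hp q hq
  have hpQ : p ∈ QQ μ := hsec.1 hp
  have hqQ : q ∈ QQ μ := hsec.1 hq
  set D := Dinf p q with hD
  set D' := Dinf q p with hD'
  have hD0 : 0 ≤ D := Dinf_nonneg p q
  have hD'0 : 0 ≤ D' := Dinf_nonneg q p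
  set ρ : ℝ → Pt S := rhoQ μ p q (fun _ => 0) with hρdef
  have hmem : ∀ t, ρ t ∈ QQ μ := fun t => rhoQ_mem hpQ hqQ _ t
  have hex : ∀ t : ℝ, ∃ x, x ∈ R ∧ ∃ b : ℝ, ρ t - x = b • eVec S :=
    fun t => (hsec.2 (ρ t) (hmem t)).exists
  choose σ hσR hβ using hex
  choose β hβeq using hβ
  have hρ0 : ρ 0 = p := rhoQ_zero hpQ rfl
  have hρ1 : ρ 1 = q := rhoQ_one hqQ rfl
  have hc1 : ∀ t s, (σ t).1 s = (ρ t).1 s - β t := by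
    intro t s
    have h := congrFun (congrArg Prod.fst (hβeq t)) s
    simp only [Prod.fst_sub, Pi.sub_apply, Prod.smul_fst, Pi.smul_apply, eVec,
      smul_eq_mul, mul_one] at h
    linarith
  have hc2 : ∀ t u, (σ t).2 u = (ρ t).2 u + β t := by
    intro t u
    have h := congrFun (congrArg Prod.snd (hβeq t)) u
    simp only [Prod.snd_sub, Pi.sub_apply, Prod.smul_snd, Pi.smul_apply, eVec,
      smul_eq_mul, mul_neg, mul_one] at h
    linarith
  have hσ0 : σ 0 = p := by
    refine (hsec.2 p hpQ).unique ⟨hσR 0, β 0, ?_⟩ ⟨hp, 0, by simp⟩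
    rw [← hρ0]; exact hβeq 0
  have hσ1 : σ 1 = q := by
    refine (hsec.2 q hqQ).unique ⟨hσR 1, β 1, ?_⟩ ⟨hq, 0, by simp⟩
    rw [← hρ1]; exact hβeq 1
  obtain s₀ := Classical.arbitrary S
  have hβ0 : β 0 = 0 := by
    have h := hc1 0 s₀
    rw [hσ0, hρ0] at h
    linarith
  have hβ1 : β 1 = 0 := by
    have h := hc1 1 s₀
    rw [hσ1, hρ1] at h
    linarith
  have hρ1s : ∀ t s, (ρ t).1 s = cQ p q t s := fun t s => add_zero _
  have hρ2u : ∀ t u, (ρ t).2 u = psi μ (cQ p q t) u := fun t u => sub_zero _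
  have hbal1 : ∀ x ∈ R, ∀ y ∈ R, ∃ s, y.1 s ≤ x.1 s := by
    intro x hx y hy
    by_contra h
    push_neg at h
    exact hbal.1 ⟨x, hx, y, hy, h⟩
  have hub : ∀ t t', 0 ≤ t → t ≤ t' → t' ≤ 1 → β t' - β t ≤ D * (t' - t) := by
    intro t t' h0 htt h1
    obtain ⟨s, hs⟩ := hbal1 (σ t') (hσR t') (σ t) (hσR t)
    rw [hc1 t s, hc1 t' s, hρ1s, hρ1s] at hs
    have h2 := cQ_shift_up (p := p) (q := q) h0 htt h1 s
    rw [← hD] at h2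
    linarith
  have hlb : ∀ t t', 0 ≤ t → t ≤ t' → t' ≤ 1 → -(D' * (t' - t)) ≤ β t' - β t := by
    intro t t' h0 htt h1
    obtain ⟨s, hs⟩ := hbal1 (σ t) (hσR t) (σ t') (hσR t')
    rw [hc1 t s, hc1 t' s, hρ1s, hρ1s] at hs
    have h2 := cQ_shift_down (p := p) (q := q) h0 htt h1 s
    rw [← hD'] at h2
    linarith
  have hσeq : ∀ t, σ t = ρ t - β t • eVec S := by
    intro t
    have h := hβeq t
    rw [sub_eq_iff_eq_add] at h
    rw [h]
    abel
  have hβcont : ContinuousOn β (Set.Icc 0 1) := by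
    apply LipschitzOnWith.continuousOn (K := Real.toNNReal (D + D'))
    apply LipschitzOnWith.of_dist_le_mul
    intro x hx y hy
    rw [Real.dist_eq, Real.dist_eq, Real.coe_toNNReal _ (by linarith)]
    rcases le_total x y with hxy | hxy
    · have h1 := hub x y hx.1 hxy hy.2
      have h2 := hlb x y hx.1 hxy hy.2
      rw [abs_of_nonpos (by linarith : x - y ≤ 0)]
      rw [abs_le]
      constructor <;> nlinarith
    · have h1 := hub y x hy.1 hxy hx.2
      have h2 := hlb y x hy.1 hxy hx.2
      rw [abs_of_nonneg (by linarith : 0 ≤ x - y)]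
      rw [abs_le]
      constructor <;> nlinarith
  have hσcont : ContinuousOn σ (Set.Icc (0:ℝ) 1) := by
    have h : ContinuousOn (fun t => ρ t - β t • eVec S) (Set.Icc (0:ℝ) 1) :=
      (rhoQ_cont p q continuous_const).continuousOn.sub
        (hβcont.smul continuousOn_const)
    exact h.congr fun t _ => hσeq t
  refine ⟨σ, hσcont, ?_, hσ0, hσ1, ?_⟩
  · rintro x ⟨t, -, rfl⟩
    exact hσR t
  · refine pathLen_eq (fun t => -β t) (by show -β 0 = 0; rw [hβ0]; ring)
      (by show -β 1 = 0; rw [hβ1]; ring) ?_ ?_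
    · intro t t' h0 htt h1
      have hCnn : 0 ≤ D * (t' - t) + (-β t' - -β t) := by
        have := hub t t' h0 htt h1
        linarith
      apply Dinf_le hCnn
      · intro s
        have h2 := cQ_shift_up (p := p) (q := q) h0 htt h1 s
        rw [← hD] at h2
        rw [hc1 t s, hc1 t' s, hρ1s, hρ1s]
        linarith
      · intro u
        have hsh : ∀ s, cQ p q t' s ≤ cQ p q t s + D * (t' - t) := by
          intro s
          have := cQ_shift_up (p := p) (q := q) h0 htt h1 s
          rw [← hD] at this
          exact this
        have h2 := psi_shift (μ := μ) hsh u
        rw [hc2 t u, hc2 t' u, hρ2u, hρ2u]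
        linarith
    · rw [hσ0, hσ1]
end Aux6

/-- Proposition 2.10.  `T_μ`, `Q_μ`, `Q_μ^+` and every balanced section of
`Q_μ` are geodesic. -/
theorem stmt6 {S : Type*} [Fintype S] [Nonempty S] (μ : S → S → ℝ)
    (hμ : DirDist μ) :
    IsGeodesicSet (TT μ) ∧ IsGeodesicSet (QQ μ) ∧ IsGeodesicSet (QP μ) ∧
    ∀ R : Set (Pt S), IsSection μ R → BalancedSet R → IsGeodesicSet R :=
  ⟨TT_geodesic, QQ_geodesic, QP_geodesic hμ,
    fun _ hsec hbal => section_geodesic hsec hbal⟩
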